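/- If H is a block of a connected graph G, then srd(H) ≤ srd(G). -/

import Mathlib

open SimpleGraph

/-- `F` is an edge-cut of `G` separating `u` and `v`. -/
def CutsBetween {V : Type*} (G : SimpleGraph V) (u v : V) (F : Finset (Sym2 V)) : Prop :=
  ↑F ⊆ G.edgeSet ∧ ¬ (G.deleteEdges ↑F).Reachable u v

/-- `lam G u v` is the minimum number of edges in an edge-cut of `G` separating `u` and `v`. -/
noncomputable def lam {V : Type*} (G : SimpleGraph V) (u v : V) : ℕ :=
  sInf {n | ∃ F : Finset (Sym2 V), CutsBetween G u v F ∧ F.card = n}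

/-- `c` is a strong rainbow disconnection coloring of `G`: every pair of distinct vertices
admits a rainbow minimum edge-cut separating them. -/
def IsSRDColoring {V : Type*} (G : SimpleGraph V) (c : Sym2 V → ℕ) : Prop :=
  ∀ u v : V, u ≠ v → ∃ F : Finset (Sym2 V),
    CutsBetween G u v F ∧ F.card = lam G u v ∧ Set.InjOn c ↑F

/-- The strong rainbow disconnection number of `G`. -/
noncomputable def srd {V : Type*} (G : SimpleGraph V) : ℕ :=
  sInf {k | ∃ c : Sym2 V → ℕ, (∀ e ∈ G.edgeSet, c e < k) ∧ IsSRDColoring G c}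

/-- `B` is a block of `G`: a maximal connected subgraph without cut-vertices. -/
def IsBlock {V : Type*} (G : SimpleGraph V) (B : G.Subgraph) : Prop :=
  B.verts.Nonempty ∧ B.coe.Connected ∧
  (∀ v : B.verts, (B.coe.induce {w | w ≠ v}).Preconnected) ∧
  ∀ B' : G.Subgraph, B ≤ B' → B'.coe.Connected →
    (∀ v : B'.verts, (B'.coe.induce {w | w ≠ v}).Preconnected) → B = B'

/-- `H` is a cycle graph: connected and 2-regular. -/
def IsCycleGraph {W : Type*} (H : SimpleGraph W) : Prop :=
  H.Connected ∧ ∀ v : W, Nat.card (H.neighborSet v) = 2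

section Auxiliary

variable {V : Type*} {G : SimpleGraph V}

private lemma sym2_val_inj {s : Set V} :
    Function.Injective (Sym2.map (Subtype.val : s → V)) :=
  Sym2.map.injective Subtype.val_injective

private lemma coe_edge_mem {H : G.Subgraph} {e : Sym2 ↥H.verts} (he : e ∈ H.coe.edgeSet) :
    Sym2.map Subtype.val e ∈ H.edgeSet := by
  induction e using Sym2.ind with
  | _ x y => simpa using he

private lemma edge_mem_G {H : G.Subgraph} {e : Sym2 ↥H.verts} (he : e ∈ H.coe.edgeSet) :
    Sym2.map Subtype.val e ∈ G.edgeSet :=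
  H.edgeSet_subset (coe_edge_mem he)

/-- A cut in `G` restricts to a cut in a subgraph, of no larger size. -/
private lemma cut_down (H : G.Subgraph) {u v : V} (hu : u ∈ H.verts) (hv : v ∈ H.verts)
    {F : Finset (Sym2 V)} (hF : CutsBetween G u v F) :
    ∃ FH : Finset (Sym2 ↥H.verts), CutsBetween H.coe ⟨u, hu⟩ ⟨v, hv⟩ FH ∧
      FH.card ≤ F.card ∧ ∀ e ∈ FH, Sym2.map Subtype.val e ∈ F := by
  classical
  set FH : Finset (Sym2 ↥H.verts) :=
    (F.preimage (Sym2.map Subtype.val) (sym2_val_inj.injOn)).filter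
      (fun e => e ∈ H.coe.edgeSet) with hFH
  have hFHmem : ∀ e : Sym2 ↥H.verts,
      e ∈ FH ↔ Sym2.map Subtype.val e ∈ F ∧ e ∈ H.coe.edgeSet := by
    intro e; simp [hFH, Finset.mem_preimage]
  refine ⟨FH, ⟨?_, ?_⟩, ?_, fun e he => ((hFHmem e).1 he).1⟩
  · intro e he
    exact ((hFHmem e).1 he).2
  · rintro ⟨q⟩
    apply hF.2
    refine ⟨(q.map ⟨Subtype.val, ?_⟩).copy rfl rfl⟩
    · intro x y hxy
      rw [deleteEdges_adj] at hxy ⊢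
      refine ⟨H.adj_sub hxy.1, ?_⟩
      intro hmem
      exact hxy.2 (Finset.mem_coe.mpr ((hFHmem s(x, y)).2
        ⟨by simpa using hmem, hxy.1⟩))
  · exact Finset.card_le_card_of_injOn (Sym2.map Subtype.val)
      (fun e he => ((hFHmem e).1 he).1) (sym2_val_inj.injOn)

private lemma lift_reach {H : G.Subgraph} (F' : Finset (Sym2 ↥H.verts))
    {a b : V} (q : G.Walk a b)
    (hs : ∀ x ∈ q.support, x ∈ H.verts)
    (he : ∀ e ∈ q.edges, e ∈ H.edgeSet)
    (hf : ∀ e' : Sym2 ↥H.verts, Sym2.map Subtype.val e' ∈ q.edges → e' ∉ F')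
    (ha : a ∈ H.verts) (hb : b ∈ H.verts) :
    (H.coe.deleteEdges ↑F').Reachable ⟨a, ha⟩ ⟨b, hb⟩ := by
  induction q with
  | nil => exact Reachable.refl _
  | @cons a c b h q ih =>
    have hc : c ∈ H.verts := hs c (by simp)
    have hadj : H.Adj a c := (H.mem_edgeSet).1 (he _ (by simp))
    have hstep : (H.coe.deleteEdges ↑F').Adj ⟨a, ha⟩ ⟨c, hc⟩ := by
      rw [deleteEdges_adj]
      refine ⟨hadj, ?_⟩
      intro hmem
      exact hf s(⟨a, ha⟩, ⟨c, hc⟩) (by simp) (Finset.mem_coe.mp hmem)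
    exact hstep.reachable.trans (ih (fun x hx => hs x (by simp [hx]))
      (fun e heq => he e (by simp [heq])) (fun e' hm => hf e' (by simp [hm])) hc hb)

/-- A cut in the subgraph lifts to a cut in `G`, provided every `G`-path between the two
vertices stays in the subgraph. -/
private lemma cut_up [DecidableEq (Sym2 V)] (H : G.Subgraph) {u v : V}
    (hu : u ∈ H.verts) (hv : v ∈ H.verts)
    (hkey : ∀ (p : G.Walk u v), p.IsPath →
      (∀ x ∈ p.support, x ∈ H.verts) ∧ (∀ e ∈ p.edges, e ∈ H.edgeSet))
    {F' : Finset (Sym2 ↥H.verts)} (hF' : CutsBetween H.coe ⟨u, hu⟩ ⟨v, hv⟩ F') :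
    CutsBetween G u v (F'.image (Sym2.map Subtype.val)) ∧
      (F'.image (Sym2.map Subtype.val)).card = F'.card := by
  classical
  refine ⟨⟨?_, ?_⟩, Finset.card_image_of_injective _ sym2_val_inj⟩
  · intro e he
    simp only [Finset.coe_image, Set.mem_image, Finset.mem_coe] at he
    obtain ⟨e', he', rfl⟩ := he
    exact edge_mem_G (hF'.1 he')
  · rintro ⟨q⟩
    apply hF'.2
    have hle : G.deleteEdges ↑(F'.image (Sym2.map Subtype.val)) ≤ G := by
      exact deleteEdges_le _
    have hedges : ∀ e ∈ q.edges, e ∉ (F'.image (Sym2.map Subtype.val)) := by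
      intro e heq hmem
      have := q.edges_subset_edgeSet heq
      rw [edgeSet_deleteEdges] at this
      exact this.2 (Finset.mem_coe.mpr hmem)
    let q' : G.Walk u v := q.mapLe hle
    have hid : Sym2.map ⇑(Hom.ofLE hle) = id := by
      funext e
      induction e using Sym2.ind with
      | _ x y => rfl
    have hq'e : q'.edges = q.edges := by
      simp [q', Walk.mapLe, Walk.edges_map, hid]
    let p : G.Walk u v := q'.toPath
    have hpsub : ∀ e ∈ p.edges, e ∈ q.edges := by
      intro e hep
      have : e ∈ q'.edges := Walk.edges_toPath_subset q' hep
      rwa [hq'e] at this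
    obtain ⟨hsup, hed⟩ := hkey p q'.toPath.2
    exact lift_reach F' p hsup hed
      (fun e' hm => fun hmem => hedges _ (hpsub _ hm)
        (Finset.mem_image_of_mem _ hmem)) hu hv

private lemma cuts_exists (G : SimpleGraph V) [Finite V] {u v : V} (hne : u ≠ v) :
    ∃ n, n ∈ {n | ∃ F : Finset (Sym2 V), CutsBetween G u v F ∧ F.card = n} := by
  classical
  refine ⟨_, (Set.toFinite G.edgeSet).toFinset, ⟨?_, ?_⟩, rfl⟩
  · simp
  · have hbot : G.deleteEdges ↑(Set.toFinite G.edgeSet).toFinset = ⊥ := by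
      ext x y
      simp only [deleteEdges_adj, Set.Finite.coe_toFinset, bot_adj, iff_false, not_and, not_not]
      exact fun h => h
    rw [hbot]
    exact fun h => hne (reachable_bot.mp h)

/-- Existence of a minimum cut. -/
private lemma exists_min_cut (G : SimpleGraph V) [Finite V] {u v : V} (hne : u ≠ v) :
    ∃ F : Finset (Sym2 V), CutsBetween G u v F ∧ F.card = lam G u v :=
  Nat.sInf_mem (cuts_exists G hne)

private lemma lam_eq [Finite V] (H : G.Subgraph) {u v : V}
    (hu : u ∈ H.verts) (hv : v ∈ H.verts) (hne : u ≠ v)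
    (hkey : ∀ (p : G.Walk u v), p.IsPath →
      (∀ x ∈ p.support, x ∈ H.verts) ∧ (∀ e ∈ p.edges, e ∈ H.edgeSet)) :
    lam H.coe ⟨u, hu⟩ ⟨v, hv⟩ = lam G u v := by
  classical
  have hne' : (⟨u, hu⟩ : H.verts) ≠ ⟨v, hv⟩ := fun h => hne (congrArg Subtype.val h)
  apply le_antisymm
  · obtain ⟨F, hF, hcard⟩ := exists_min_cut G hne
    obtain ⟨FH, hFH, hle, _⟩ := cut_down H hu hv hF
    exact le_trans (Nat.sInf_le ⟨FH, hFH, rfl⟩) (hcard ▸ hle)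
  · obtain ⟨F', hF', hcard⟩ := exists_min_cut H.coe hne'
    obtain ⟨hcut, hcard2⟩ := cut_up H hu hv hkey hF'
    exact le_trans (Nat.sInf_le ⟨_, hcut, rfl⟩) (by rw [hcard2, hcard])

private lemma srd_nonempty (G : SimpleGraph V) [Fintype V] :
    Set.Nonempty {k | ∃ c : Sym2 V → ℕ, (∀ e ∈ G.edgeSet, c e < k) ∧ IsSRDColoring G c} := by
  classical
  refine ⟨Fintype.card (Sym2 V), fun e => ((Fintype.equivFin (Sym2 V)) e : ℕ), ?_, ?_⟩
  · intro e _
    exact ((Fintype.equivFin (Sym2 V)) e).is_lt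
  · intro u v hne
    obtain ⟨F, hF, hc⟩ := exists_min_cut G hne
    exact ⟨F, hF, hc,
      (Fin.val_injective.comp (Fintype.equivFin (Sym2 V)).injective).injOn⟩

private lemma srd_le [Fintype V] (H : G.Subgraph)
    (hkey : ∀ (u v : V), u ∈ H.verts → v ∈ H.verts → ∀ p : G.Walk u v, p.IsPath →
      (∀ x ∈ p.support, x ∈ H.verts) ∧ (∀ e ∈ p.edges, e ∈ H.edgeSet)) :
    srd H.coe ≤ srd G := by
  classical
  obtain ⟨c, hbound, hsrd⟩ := Nat.sInf_mem (srd_nonempty G)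
  apply Nat.sInf_le
  refine ⟨fun e => c (Sym2.map Subtype.val e), ?_, ?_⟩
  · intro e he
    exact hbound _ (edge_mem_G he)
  · rintro ⟨u, hu⟩ ⟨v, hv⟩ hne
    have hne' : u ≠ v := fun h => hne (Subtype.ext h)
    obtain ⟨F, hF, hcard, hinj⟩ := hsrd u v hne'
    obtain ⟨FH, hFH, hle, hmap⟩ := cut_down H hu hv hF
    have hlam := lam_eq H hu hv hne' (hkey u v hu hv)
    refine ⟨FH, hFH, ?_, ?_⟩
    · exact le_antisymm (hlam ▸ (hcard ▸ hle)) (Nat.sInf_le ⟨FH, hFH, rfl⟩)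
    · intro e1 he1 e2 he2 hc
      exact sym2_val_inj (hinj (Finset.mem_coe.mpr (hmap e1 (Finset.mem_coe.mp he1)))
        (Finset.mem_coe.mpr (hmap e2 (Finset.mem_coe.mp he2))) hc)

private lemma walk_reach_induce (B : G.Subgraph) (w : ↥B.verts)
    {a b : V} (q : G.Walk a b)
    (hs : ∀ x ∈ q.support, x ∈ B.verts)
    (he : ∀ e ∈ q.edges, e ∈ B.edgeSet)
    (hw : (↑w : V) ∉ q.support)
    (ha : a ∈ B.verts) (hb : b ∈ B.verts)
    (ha' : (⟨a, ha⟩ : ↥B.verts) ≠ w) (hb' : (⟨b, hb⟩ : ↥B.verts) ≠ w) :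
    (B.coe.induce {z | z ≠ w}).Reachable ⟨⟨a, ha⟩, ha'⟩ ⟨⟨b, hb⟩, hb'⟩ := by
  induction q with
  | nil =>
    exact Reachable.refl _
  | @cons a c b h q ih =>
    have hc : c ∈ B.verts := hs c (by simp)
    have hc' : (⟨c, hc⟩ : ↥B.verts) ≠ w := by
      intro heq
      exact hw (by rw [← heq]; simp)
    have hadj : (B.coe.induce {z | z ≠ w}).Adj ⟨⟨a, ha⟩, ha'⟩ ⟨⟨c, hc⟩, hc'⟩ := by
      simp only [comap_adj, Function.Embedding.coe_subtype]
      exact (B.mem_edgeSet).1 (he _ (by simp))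
    exact hadj.reachable.trans (ih (fun x hx => hs x (by simp [hx]))
      (fun e heq => he e (by simp [heq]))
      (fun hmem => hw (by simp [hmem])) hc hb hc' hb')

private def homHInduce {H B : G.Subgraph} (hHB : H ≤ B) (w : ↥B.verts)
    (hwH : (↑w : V) ∈ H.verts) :
    (H.coe.induce {w' | w' ≠ (⟨↑w, hwH⟩ : ↥H.verts)}) →g (B.coe.induce {z' | z' ≠ w}) :=
  ⟨fun x => ⟨⟨x.1.1, hHB.1 x.1.2⟩,
      fun h => x.2 (Subtype.ext (show (x.1.1 : V) = ↑w from congrArg Subtype.val h))⟩,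
    fun hadj => hHB.2 hadj⟩

private def homH {H B : G.Subgraph} (hHB : H ≤ B) (w : ↥B.verts)
    (hwH : (↑w : V) ∉ H.verts) :
    H.coe →g (B.coe.induce {z' | z' ≠ w}) :=
  ⟨fun x => ⟨⟨x.1, hHB.1 x.2⟩,
      fun h => hwH (by rw [← show (x.1 : V) = ↑w from congrArg Subtype.val h]; exact x.2)⟩,
    fun hadj => hHB.2 hadj⟩

private lemma block_sup_no_cut (H : G.Subgraph) (hconn : H.coe.Connected)
    (hnc : ∀ v : ↥H.verts, (H.coe.induce {w | w ≠ v}).Preconnected)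
    {u v : V} (hu : u ∈ H.verts) (hv : v ∈ H.verts)
    (p : G.Walk u v) (hp : p.IsPath) :
    ∀ w : ↥(H ⊔ p.toSubgraph).verts,
      ((H ⊔ p.toSubgraph).coe.induce {z | z ≠ w}).Preconnected := by
  classical
  set B := H ⊔ p.toSubgraph with hBdef
  intro w
  have hHsub : H ≤ B := le_sup_left
  have hPsub : p.toSubgraph ≤ B := le_sup_right
  have hsupmem : ∀ x ∈ p.support, x ∈ B.verts :=
    fun x hx => hPsub.1 ((p.mem_verts_toSubgraph).2 hx)
  have hedmem : ∀ e ∈ p.edges, e ∈ B.edgeSet :=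
    fun e he => Subgraph.edgeSet_mono hPsub (by rw [Walk.edgeSet_toSubgraph]; exact he)
  have claimB : ∀ (y z : V) (hy : y ∈ H.verts) (hz : z ∈ H.verts)
      (hyB : y ∈ B.verts) (hzB : z ∈ B.verts)
      (hyw : (⟨y, hyB⟩ : ↥B.verts) ≠ w) (hzw : (⟨z, hzB⟩ : ↥B.verts) ≠ w),
      (B.coe.induce {z' | z' ≠ w}).Reachable ⟨⟨y, hyB⟩, hyw⟩ ⟨⟨z, hzB⟩, hzw⟩ := by
    by_cases hwH : (↑w : V) ∈ H.verts
    · intro y z hy hz hyB hzB hyw hzw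
      have hne_y : (⟨y, hy⟩ : ↥H.verts) ≠ ⟨↑w, hwH⟩ :=
        fun h => hyw (Subtype.ext (show y = (↑w : V) from congrArg Subtype.val h))
      have hne_z : (⟨z, hz⟩ : ↥H.verts) ≠ ⟨↑w, hwH⟩ :=
        fun h => hzw (Subtype.ext (show z = (↑w : V) from congrArg Subtype.val h))
      exact Reachable.map (homHInduce hHsub w hwH)
        (hnc ⟨↑w, hwH⟩ ⟨⟨y, hy⟩, hne_y⟩ ⟨⟨z, hz⟩, hne_z⟩)
    · intro y z hy hz hyB hzB hyw hzw
      exact Reachable.map (homH hHsub w hwH) (hconn ⟨y, hy⟩ ⟨z, hz⟩)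
  have claimA : ∀ (x : V) (hx : x ∈ B.verts) (hxw : (⟨x, hx⟩ : ↥B.verts) ≠ w),
      ∃ (y : V) (hy : y ∈ H.verts) (hyB : y ∈ B.verts)
        (hyw : (⟨y, hyB⟩ : ↥B.verts) ≠ w),
        (B.coe.induce {z' | z' ≠ w}).Reachable ⟨⟨x, hx⟩, hxw⟩ ⟨⟨y, hyB⟩, hyw⟩ := by
    intro x hx hxw
    have hx' : x ∈ H.verts ∪ p.toSubgraph.verts := by
      rw [← Subgraph.verts_sup]; exact hx
    rcases hx' with hxH | hxP
    · exact ⟨x, hxH, hx, hxw, Reachable.refl _⟩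
    · have hxs : x ∈ p.support := (p.mem_verts_toSubgraph).1 hxP
      by_cases hw1 : (↑w : V) ∈ (p.takeUntil x hxs).support
      · have hw2 : (↑w : V) ∉ (p.dropUntil x hxs).support := by
          intro hw2
          have hnd := hp.support_nodup
          rw [← p.take_spec hxs, Walk.support_append] at hnd
          have hdisj := List.disjoint_of_nodup_append hnd
          rw [Walk.support_eq_cons (p.dropUntil x hxs), List.mem_cons] at hw2
          rcases hw2 with hw2 | hw2
          · exact hxw (Subtype.ext hw2.symm)
          · exact hdisj hw1 hw2
        have hvB : v ∈ B.verts := hHsub.1 hv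
        have hvw : (⟨v, hvB⟩ : ↥B.verts) ≠ w := by
          intro h
          exact hw2 (by rw [← congrArg Subtype.val h]; exact Walk.end_mem_support _)
        refine ⟨v, hv, hvB, hvw, ?_⟩
        exact walk_reach_induce B w (p.dropUntil x hxs)
          (fun y hy => hsupmem y (Walk.support_dropUntil_subset p hxs hy))
          (fun e he => hedmem e (Walk.edges_dropUntil_subset p hxs he))
          hw2 hx hvB hxw hvw
      · have huB : u ∈ B.verts := hHsub.1 hu
        have huw : (⟨u, huB⟩ : ↥B.verts) ≠ w := by
          intro h
          exact hw1 (by rw [← congrArg Subtype.val h]; exact Walk.start_mem_support _)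
        refine ⟨u, hu, huB, huw, ?_⟩
        exact walk_reach_induce B w (p.takeUntil x hxs).reverse
          (fun y hy => hsupmem y (Walk.support_takeUntil_subset p hxs
            (by rwa [Walk.support_reverse, List.mem_reverse] at hy)))
          (fun e he => hedmem e (Walk.edges_takeUntil_subset p hxs
            (by rwa [Walk.edges_reverse, List.mem_reverse] at he)))
          (by rwa [Walk.support_reverse, List.mem_reverse]) hx huB hxw huw
  rintro ⟨⟨xa, hxa⟩, hwa⟩ ⟨⟨xb, hxb⟩, hwb⟩
  simp only [Set.mem_setOf_eq] at hwa hwb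
  obtain ⟨ya, hyaH, hyaB, hyaw, hra⟩ := claimA xa hxa hwa
  obtain ⟨yb, hybH, hybB, hybw, hrb⟩ := claimA xb hxb hwb
  exact hra.trans ((claimB ya yb hyaH hybH hyaB hybB hyaw hybw).trans hrb.symm)

/-- Every path of `G` between two vertices of a block stays inside the block. -/
private lemma block_walk_mem (H : G.Subgraph) (hH : IsBlock G H) {u v : V}
    (hu : u ∈ H.verts) (hv : v ∈ H.verts) (p : G.Walk u v) (hp : p.IsPath) :
    (∀ x ∈ p.support, x ∈ H.verts) ∧ (∀ e ∈ p.edges, e ∈ H.edgeSet) := by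
  obtain ⟨hne, hconn, hnc, hmax⟩ := hH
  have hconn' : (H ⊔ p.toSubgraph).Connected :=
    Subgraph.connected_sup ⟨hconn.preconnected⟩ p.toSubgraph_connected.preconnected
      ⟨u, by rw [Subgraph.verts_inf]; exact ⟨hu, p.start_mem_verts_toSubgraph⟩⟩
  have heq := hmax (H ⊔ p.toSubgraph) le_sup_left hconn'.coe
    (block_sup_no_cut H hconn hnc hu hv p hp)
  have hle : p.toSubgraph ≤ H := by rw [heq]; exact le_sup_right
  exact ⟨fun x hx => hle.1 ((p.mem_verts_toSubgraph).2 hx),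
    fun e he => Subgraph.edgeSet_mono hle (by rw [Walk.edgeSet_toSubgraph]; exact he)⟩

end Auxiliary

theorem stmt5 {V : Type*} [Fintype V] (G : SimpleGraph V) (hV : Nontrivial V)
    (hG : G.Connected) (H : G.Subgraph) (hH : IsBlock G H)
    (hHe : H.edgeSet.Nonempty) :
    srd H.coe ≤ srd G := by
  exact srd_le H (fun u v hu hv p hp => block_walk_mem H hH hu hv p hp)
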